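/- arXiv:alg-geom/9605001 — 2 statements merged into one kernel-verified Lean document; each statement's English description precedes it below -/
import Mathlib

section
/- Every nonzero finitely generated O'-submodule a of K is principal; more precisely, a = uⁱ·tⁿ·O' for uniquely determined integers i, n ∈ ℤ. -/
set_option synthInstance.maxHeartbeats 1000000
set_option maxHeartbeats 1000000

noncomputable section

open HahnSeries

namespace TwoDimLocal

variable (k : Type) [Field k]

/-- `k((u))`, the field of Laurent series over `k`. -/
abbrev K1 := LaurentSeries k

/-- `K = k((u))((t))`, the two-dimensional local field of iterated Laurent series. -/
abbrev K := LaurentSeries (LaurentSeries k)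

section Nonneg

variable (F : Type) [Field F]

lemma order_nonneg_of_support {x : LaurentSeries F} (hx : x ≠ 0)
    (h : ∀ n : ℤ, n < 0 → x.coeff n = 0) : 0 ≤ x.order := by
  by_contra hlt
  push_neg at hlt
  exact hx (coeff_order_eq_zero.1 (h x.order hlt))

/-- The subring `F[[X]] ⊆ F((X))` of power series, described by vanishing of the
coefficients of negative index. -/
def nonneg : Subring (LaurentSeries F) where
  carrier := {x | ∀ n : ℤ, n < 0 → x.coeff n = 0}
  zero_mem' := by intro n _; simp
  one_mem' := by
    intro n hn
    rw [HahnSeries.coeff_one, if_neg (by omega)]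
  add_mem' := by
    intro a b ha hb n hn
    rw [HahnSeries.coeff_add, ha n hn, hb n hn, add_zero]
  neg_mem' := by
    intro a ha n hn
    rw [HahnSeries.coeff_neg, ha n hn, neg_zero]
  mul_mem' := by
    intro a b ha hb n hn
    by_contra hne
    obtain ⟨i, hi, j, hj, rfl⟩ := support_mul_subset ((mem_support _ _).2 hne)
    rw [mem_support] at hi hj
    have hi0 : 0 ≤ i := by by_contra h; push_neg at h; exact hi (ha i h)
    have hj0 : 0 ≤ j := by by_contra h; push_neg at h; exact hj (hb j h)
    exact absurd hn (not_lt.2 (add_nonneg hi0 hj0))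

lemma mem_nonneg_iff {x : LaurentSeries F} :
    x ∈ nonneg F ↔ ∀ n : ℤ, n < 0 → x.coeff n = 0 := Iff.rfl

lemma coeff_zero_mul {x y : LaurentSeries F} (hx : x ∈ nonneg F) (hy : y ∈ nonneg F) :
    (x * y).coeff 0 = x.coeff 0 * y.coeff 0 := by
  rcases eq_or_ne x 0 with rfl | hx0
  · simp
  rcases eq_or_ne y 0 with rfl | hy0
  · simp
  have hxo : 0 ≤ x.order := order_nonneg_of_support F hx0 hx
  have hyo : 0 ≤ y.order := order_nonneg_of_support F hy0 hy
  rcases lt_or_eq_of_le hxo with hxo' | hxo'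
  · have h1 : x.coeff 0 = 0 := HahnSeries.coeff_eq_zero_of_lt_order hxo'
    have h2 : (x * y).coeff 0 = 0 := by
      apply HahnSeries.coeff_eq_zero_of_lt_order
      rw [HahnSeries.order_mul_of_ne_zero (by simp [hx0, hy0])]
      omega
    rw [h1, h2, zero_mul]
  rcases lt_or_eq_of_le hyo with hyo' | hyo'
  · have h1 : y.coeff 0 = 0 := HahnSeries.coeff_eq_zero_of_lt_order hyo'
    have h2 : (x * y).coeff 0 = 0 := by
      apply HahnSeries.coeff_eq_zero_of_lt_order
      rw [HahnSeries.order_mul_of_ne_zero (by simp [hx0, hy0])]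
      omega
    rw [h1, h2, mul_zero]
  have := HahnSeries.coeff_mul_order_add_order x y
  rw [HahnSeries.leadingCoeff_eq, HahnSeries.leadingCoeff_eq, ← hxo', ← hyo'] at this
  simpa using this

end Nonneg

/-- The ring of integers `O_K = k((u))[[t]]` of `K` with respect to the `t`-adic valuation. -/
def OK : Subring (K k) := nonneg (K1 k)

/-- The rank-2 valuation subring `O' = p⁻¹(k[[u]]) ⊆ K`, consisting of those `t`-adic
integers whose constant `t`-coefficient is a power series in `u`. -/
def Oprime : Subring (K k) where
  carrier := {x | x ∈ OK k ∧ x.coeff 0 ∈ nonneg k}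
  zero_mem' := ⟨Subring.zero_mem _, by simp⟩
  one_mem' := ⟨Subring.one_mem _, by
    intro n hn
    rw [show ((1 : K k).coeff 0) = 1 from by rw [HahnSeries.coeff_one]; simp]
    rw [HahnSeries.coeff_one, if_neg (by omega)]⟩
  add_mem' := by
    rintro a b ⟨ha1, ha2⟩ ⟨hb1, hb2⟩
    refine ⟨Subring.add_mem _ ha1 hb1, ?_⟩
    rw [HahnSeries.coeff_add]
    exact Subring.add_mem _ ha2 hb2
  neg_mem' := by
    rintro a ⟨ha1, ha2⟩
    refine ⟨Subring.neg_mem _ ha1, ?_⟩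
    rw [HahnSeries.coeff_neg]
    exact Subring.neg_mem _ ha2
  mul_mem' := by
    rintro a b ⟨ha1, ha2⟩ ⟨hb1, hb2⟩
    refine ⟨Subring.mul_mem _ ha1 hb1, ?_⟩
    rw [coeff_zero_mul (K1 k) ha1 hb1]
    exact Subring.mul_mem _ ha2 hb2

lemma Oprime_le_OK : (Oprime k : Set (K k)) ⊆ (OK k : Set (K k)) := fun _ h => h.1

/-- The local parameter `t` of `K = k((u))((t))`. -/
def t : K k := HahnSeries.single (1 : ℤ) 1

/-- The local parameter `u` of `K = k((u))((t))`, i.e. the image in `K` of the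
local parameter of `k((u))`. -/
def u : K k := HahnSeries.C (HahnSeries.single (1 : ℤ) (1 : k))

/-- The maximal ideal `m = p⁻¹(u·k[[u]])` of `O'`, as a subset of `K`. -/
def mSet : Set (K k) := {x | x ∈ Oprime k ∧ (x.coeff 0).coeff 0 = 0}

/-- The rank-two valuation `ν' : K* → ℤ ×ₗ ℤ`: the first component is the `t`-adic order,
the second one the `u`-adic order of the leading `t`-coefficient. (Junk value at `0`.) -/
def nu (x : K k) : ℤ ×ₗ ℤ := toLex (x.order, (x.coeff x.order).order)

end TwoDimLocal

namespace TwoDimLocal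


section Aux

variable {k : Type} [Field k]

lemma lex_nonneg_iff (a b : ℤ) : 0 ≤ toLex (a, b) ↔ 0 < a ∨ (0 = a ∧ 0 ≤ b) := by
  show toLex ((0:ℤ), (0:ℤ)) ≤ toLex (a, b) ↔ _
  exact Prod.Lex.le_iff

lemma mem_nonneg_iff_order {F : Type} [Field F] {y : LaurentSeries F} (hy : y ≠ 0) :
    y ∈ nonneg F ↔ 0 ≤ y.order := by
  constructor
  · exact order_nonneg_of_support F hy
  · intro h n hn
    exact HahnSeries.coeff_eq_zero_of_lt_order (lt_of_lt_of_le hn h)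

lemma mem_Oprime_iff' {x : K k} :
    x ∈ Oprime k ↔ x ∈ OK k ∧ x.coeff 0 ∈ nonneg k := Iff.rfl

lemma nu_mul {x y : K k} (hx : x ≠ 0) (hy : y ≠ 0) :
    nu k (x * y) = nu k x + nu k y := by
  have h1 : (x * y).order = x.order + y.order := HahnSeries.order_mul hx hy
  have h2 : (x * y).coeff (x.order + y.order) = x.coeff x.order * y.coeff y.order := by
    have := HahnSeries.coeff_mul_order_add_order x y
    rwa [HahnSeries.leadingCoeff_eq, HahnSeries.leadingCoeff_eq] at this
  have hcx : x.coeff x.order ≠ 0 := fun h => hx (coeff_order_eq_zero.1 h)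
  have hcy : y.coeff y.order ≠ 0 := fun h => hy (coeff_order_eq_zero.1 h)
  unfold nu
  rw [h1, h2, HahnSeries.order_mul hcx hcy]
  rfl

lemma mem_Oprime_iff_nu {x : K k} (hx : x ≠ 0) : x ∈ Oprime k ↔ 0 ≤ nu k x := by
  have hc : x.coeff x.order ≠ 0 := fun h => hx (coeff_order_eq_zero.1 h)
  rw [mem_Oprime_iff', nu, lex_nonneg_iff]
  constructor
  · rintro ⟨h1, h2⟩
    have ho : 0 ≤ x.order := order_nonneg_of_support (K1 k) hx h1
    rcases lt_or_eq_of_le ho with ho' | ho'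
    · exact Or.inl ho'
    · refine Or.inr ⟨ho', ?_⟩
      rw [← ho']
      rw [← ho'] at hc
      exact (mem_nonneg_iff_order hc).1 h2
  · rintro (h | ⟨h1, h2⟩)
    · refine ⟨fun n hn => HahnSeries.coeff_eq_zero_of_lt_order (hn.trans h), ?_⟩
      rw [HahnSeries.coeff_eq_zero_of_lt_order h]
      exact Subring.zero_mem _
    · refine ⟨fun n hn => HahnSeries.coeff_eq_zero_of_lt_order (by omega), ?_⟩
      rw [h1]
      exact (mem_nonneg_iff_order hc).2 h2

lemma single_single_ne_zero (i n : ℤ) :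
    (HahnSeries.single n (HahnSeries.single i (1 : k)) : K k) ≠ 0 :=
  HahnSeries.single_ne_zero (HahnSeries.single_ne_zero one_ne_zero)

lemma nu_single_single (i n : ℤ) :
    nu k (HahnSeries.single n (HahnSeries.single i (1 : k))) = toLex (n, i) := by
  unfold nu
  rw [HahnSeries.order_single (HahnSeries.single_ne_zero one_ne_zero),
    HahnSeries.coeff_single_same, HahnSeries.order_single one_ne_zero]

lemma u_zpow_mul_t_zpow (i n : ℤ) :
    u k ^ i * t k ^ n = HahnSeries.single n (HahnSeries.single i (1 : k)) := by
  rw [u, t, ← map_zpow₀ (G₀ := K1 k) (G₀' := K k) (HahnSeries.C : K1 k →+* K k) (HahnSeries.single (1:ℤ) (1:k)) i,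
    ← RatFunc.single_zpow i, ← RatFunc.single_zpow n,
    HahnSeries.C_apply, HahnSeries.single_mul_single, zero_add, mul_one]

lemma mem_span_of_nu_le {x y : K k} (hy : y ≠ 0) (hx : x ≠ 0) (h : nu k y ≤ nu k x) :
    x ∈ Submodule.span (Oprime k) {y} := by
  have hyi : y⁻¹ ≠ 0 := inv_ne_zero (G₀ := K k) hy
  have hc : x * y⁻¹ ≠ 0 := mul_ne_zero hx hyi
  have hmul : (x * y⁻¹) * y = x := div_mul_cancel₀ (G₀ := K k) x hy
  have hnu : nu k (x * y⁻¹) + nu k y = nu k x := by rw [← nu_mul hc hy, hmul]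
  have h0 : 0 ≤ nu k (x * y⁻¹) := by
    rw [← hnu] at h
    exact (le_add_iff_nonneg_left _).1 h
  exact Submodule.mem_span_singleton.2 ⟨⟨_, (mem_Oprime_iff_nu hc).2 h0⟩, hmul⟩

lemma nu_le_of_mem_span {x y : K k} (hy : y ≠ 0) (hx : x ≠ 0)
    (h : x ∈ Submodule.span (Oprime k) {y}) : nu k y ≤ nu k x := by
  obtain ⟨c, hc⟩ := Submodule.mem_span_singleton.1 h
  have hc' : (c : K k) * y = x := hc
  have hc0 : (c : K k) ≠ 0 := by
    rintro h0
    apply hx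
    rw [← hc', h0, zero_mul (M₀ := K k)]
  have h0 : 0 ≤ nu k (c : K k) := (mem_Oprime_iff_nu hc0).1 c.2
  rw [← hc', nu_mul hc0 hy]
  exact le_add_of_nonneg_left h0

lemma span_singleton_eq_of_nu_eq {x y : K k} (hx : x ≠ 0) (hy : y ≠ 0)
    (h : nu k x = nu k y) :
    Submodule.span (Oprime k) {x} = Submodule.span (Oprime k) {y} := by
  apply le_antisymm
  · exact (Submodule.span_singleton_le_iff_mem _ _).2 (mem_span_of_nu_le hy hx h.ge)
  · exact (Submodule.span_singleton_le_iff_mem _ _).2 (mem_span_of_nu_le hx hy h.le)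

end Aux

/-- Every nonzero finitely generated fractional `O'`-ideal
(`O'`-submodule of `K`) is principal, generated by `uⁱ·tⁿ` for uniquely
determined integers `i, n`. -/
theorem fg_fractional_ideal_principal (k : Type) [Field k]
    (a : Submodule (Oprime k) (K k)) (ha : a ≠ ⊥) (hfg : a.FG) :
    ∃! p : ℤ × ℤ, a = Submodule.span (Oprime k) {u k ^ p.1 * t k ^ p.2} := by
  classical
  obtain ⟨S, hS⟩ := hfg
  have hcoe : (↑(S.erase 0) : Set (K k)) = (↑S : Set (K k)) \ {0} := Finset.coe_erase _ _
  have hspan : a = Submodule.span (Oprime k) (↑(S.erase 0) : Set (K k)) := by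
    rw [← hS, hcoe]
    apply le_antisymm
    · refine le_trans (Submodule.span_mono ?_)
        (Submodule.span_insert_zero (s := (↑S : Set (K k)) \ {0})).le
      intro z hz
      by_cases h0 : z = 0
      · rw [h0]; exact Set.mem_insert _ _

      · exact Set.mem_insert_of_mem _ ⟨hz, h0⟩
    · exact Submodule.span_mono Set.diff_subset
  have hne : (S.erase 0).Nonempty := by
    by_contra hemp
    rw [Finset.not_nonempty_iff_eq_empty] at hemp
    rw [hemp] at hspan
    simp only [Finset.coe_empty, Submodule.span_empty] at hspan
    exact ha hspan
  obtain ⟨x, hxS, hxmin⟩ := (S.erase 0).exists_min_image (nu k) hne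
  have hx0 : x ≠ 0 := Finset.ne_of_mem_erase hxS
  have haspan : a = Submodule.span (Oprime k) {x} := by
    apply le_antisymm
    · rw [hspan, Submodule.span_le]
      intro y hy
      have hy' : y ∈ S.erase 0 := hy
      have hy0 : y ≠ 0 := Finset.ne_of_mem_erase hy'
      exact mem_span_of_nu_le hx0 hy0 (hxmin y hy')
    · rw [Submodule.span_le, Set.singleton_subset_iff, hspan]
      exact Submodule.subset_span hxS
  refine ⟨((x.coeff x.order).order, x.order), ?_, ?_⟩
  · show a = Submodule.span (Oprime k) {u k ^ (x.coeff x.order).order * t k ^ x.order}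
    rw [u_zpow_mul_t_zpow, haspan]
    exact span_singleton_eq_of_nu_eq hx0 (single_single_ne_zero _ _)
      ((nu_single_single _ _).symm)
  · rintro ⟨i, n⟩ hq
    simp only at hq
    rw [u_zpow_mul_t_zpow, haspan] at hq
    have h1 : nu k x ≤ toLex (n, i) := by
      rw [← nu_single_single (k := k) i n]
      exact nu_le_of_mem_span hx0 (single_single_ne_zero i n)
        (hq ▸ Submodule.mem_span_singleton_self _)
    have h2 : toLex (n, i) ≤ nu k x := by
      rw [← nu_single_single (k := k) i n]
      exact nu_le_of_mem_span (single_single_ne_zero i n) hx0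
        (hq.symm ▸ Submodule.mem_span_singleton_self _)
    have heq : toLex (n, i) = toLex (x.order, (x.coeff x.order).order) :=
      le_antisymm h2 h1
    have heq' : (n, i) = (x.order, (x.coeff x.order).order) := toLex.injective heq
    have := Prod.ext_iff.1 heq'
    simp only [Prod.mk.injEq]
    exact ⟨this.2, this.1⟩

end TwoDimLocal
end
end

section
/- The group W = (ℤ × ℤ) ⋊ ℤ/2ℤ, where the nontrivial element of ℤ/2ℤ acts on ℤ × ℤ by negation (equivalently, the group ⟨w₀, w₁, w₂ | w₀² = w₁² = w₂² = e, (w₀w₁w₂)² = e⟩), is not a Coxeter group: for every index set I and every Coxeter matrix M over I, there is no group isomorphism between the Coxeter group of M and W. In particular there is no set S of involutions in W such that (W, S) is a Coxeter system. -/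
set_option synthInstance.maxHeartbeats 400000
set_option maxHeartbeats 1000000

noncomputable section

namespace WeylPresentation

/-- Relations of `G₁ = ⟨w₀, w₁, w₂ | w₀² = w₁² = w₂² = e, (w₀w₁w₂)² = e⟩`. -/
def rels1 : Set (FreeGroup (Fin 3)) :=
  {FreeGroup.of 0 * FreeGroup.of 0, FreeGroup.of 1 * FreeGroup.of 1,
    FreeGroup.of 2 * FreeGroup.of 2,
    (FreeGroup.of 0 * FreeGroup.of 1 * FreeGroup.of 2) ^ 2}

/-- Relations of `G₂ = ⟨s, a, b | s² = e, sas⁻¹ = a⁻¹, sbs⁻¹ = b⁻¹, ab = ba⟩`,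
with `s, a, b` indexed by `0, 1, 2`. -/
def rels2 : Set (FreeGroup (Fin 3)) :=
  {FreeGroup.of 0 * FreeGroup.of 0,
    FreeGroup.of 0 * FreeGroup.of 1 * (FreeGroup.of 0)⁻¹ * FreeGroup.of 1,
    FreeGroup.of 0 * FreeGroup.of 2 * (FreeGroup.of 0)⁻¹ * FreeGroup.of 2,
    FreeGroup.of 1 * FreeGroup.of 2 * (FreeGroup.of 1)⁻¹ * (FreeGroup.of 2)⁻¹}

/-- The negation automorphism of `ℤ × ℤ` (written multiplicatively). -/
def negAut : MulAut (Multiplicative (ℤ × ℤ)) := MulEquiv.inv (Multiplicative (ℤ × ℤ))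

lemma negAut_sq : negAut * negAut = 1 := by
  ext x : 1
  show negAut (negAut x) = x
  exact inv_inv x

/-- The action of `ℤ/2ℤ` on `ℤ × ℤ` in which the nontrivial element acts by negation. -/
def negAct : Multiplicative (ZMod 2) →* MulAut (Multiplicative (ℤ × ℤ)) where
  toFun g := if Multiplicative.toAdd g = 0 then 1 else negAut
  map_one' := by simp
  map_mul' := by
    intro x y
    have hcase : ∀ z : ZMod 2, z = 0 ∨ z = 1 := by decide
    have hx := hcase (Multiplicative.toAdd x)
    have hy := hcase (Multiplicative.toAdd y)
    have hxy : Multiplicative.toAdd (x * y)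
        = Multiplicative.toAdd x + Multiplicative.toAdd y := rfl
    rcases hx with hx | hx <;> rcases hy with hy | hy <;>
      simp [hxy, hx, hy, negAut_sq] <;>
      exact fun h => absurd (by decide) h


/-- The group `W = (ℤ × ℤ) ⋊ ℤ/2ℤ`, the nontrivial element of `ℤ/2ℤ` acting by negation. -/
abbrev Wgrp : Type :=
  SemidirectProduct (Multiplicative (ℤ × ℤ)) (Multiplicative (ZMod 2)) negAct

open SemidirectProduct Multiplicative

lemma negAct_apply (h : Multiplicative (ZMod 2)) (n : Multiplicative (ℤ × ℤ)) :
    negAct h n = if Multiplicative.toAdd h = 0 then n else n⁻¹ := by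
  show (if Multiplicative.toAdd h = 0 then (1 : MulAut (Multiplicative (ℤ × ℤ))) else negAut) n = _
  split <;> rfl

lemma zmod2_sq (z : Multiplicative (ZMod 2)) : z * z = 1 := by
  revert z; decide

lemma zmod2_ne_one {z : Multiplicative (ZMod 2)} (h : z ≠ 1) : Multiplicative.toAdd z ≠ 0 := by
  revert h; revert z; decide

lemma zmod2_mul_ne {z w : Multiplicative (ZMod 2)} (hz : z ≠ 1) (hw : w ≠ 1) : z * w = 1 := by
  revert hz hw; revert z w; decide

/-- Elements of the kernel of the projection commute. -/
lemma ker_comm {x y : Wgrp} (hx : x.right = 1) (hy : y.right = 1) : x * y = y * x := by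
  ext : 1
  · rw [mul_left, mul_left, hx, hy, map_one]
    exact mul_comm _ _
  · rw [mul_right, mul_right, hx, hy]

/-- The kernel of the projection is torsion-free. -/
lemma ker_torsionfree {x : Wgrp} (hx : x.right = 1) {n : ℕ} (hn : n ≠ 0) (h : x ^ n = 1) :
    x = 1 := by
  have hx' : x = inl x.left := by
    rw [← inl_left_mul_inr_right x, hx, map_one, mul_one, left_inl]
  rw [hx', ← map_pow] at h
  have h2 : x.left ^ n = 1 := inl_injective (by rw [h, map_one])
  have h3 : n • Multiplicative.toAdd x.left = 0 := by
    rw [← toAdd_pow, h2, toAdd_one]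
  have h4 : Multiplicative.toAdd x.left = 0 := by
    rcases smul_eq_zero.mp h3 with h5 | h5
    · exact absurd h5 hn
    · exact h5
  rw [hx', show x.left = 1 from toAdd_eq_zero.mp h4, map_one]

/-- Every element outside the kernel is an involution. -/
lemma invol {x : Wgrp} (hx : x.right ≠ 1) : x * x = 1 := by
  ext : 1
  · rw [mul_left, negAct_apply, if_neg (zmod2_ne_one hx), mul_inv_cancel, one_left]
  · rw [mul_right, zmod2_sq, one_right]

lemma key (I : Type) (M : CoxeterMatrix I) : IsEmpty (M.Group ≃* Wgrp) := by
  constructor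
  intro φ
  let cs := M.toCoxeterSystem
  let g : I → Wgrp := fun i => φ (cs.simple i)
  have hs_ne : ∀ i, cs.simple i ≠ 1 := by
    intro i h
    have h1 := cs.length_simple i
    rw [h, cs.length_one] at h1
    exact absurd h1 (by norm_num)
  have hg_right : ∀ i, (g i).right ≠ 1 := by
    intro i h1
    have hsq : g i ^ 2 = 1 := by
      show φ (cs.simple i) ^ 2 = 1
      rw [← map_pow, CoxeterSystem.simple_sq, map_one]
    have h2 : g i = 1 := ker_torsionfree h1 two_ne_zero hsq
    exact hs_ne i (φ.injective (by rw [show φ (cs.simple i) = 1 from h2, map_one]))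
  have hprod_right : ∀ i j, (φ (cs.simple i * cs.simple j)).right = 1 := by
    intro i j
    rw [map_mul, mul_right]
    exact zmod2_mul_ne (hg_right i) (hg_right j)
  have hMne : ∀ i j, M i j ≠ 0 → (g i).left = (g j).left := by
    intro i j hM
    have h1 : (cs.simple i * cs.simple j) ^ M i j = 1 := cs.simple_mul_simple_pow i j
    have h2 : φ (cs.simple i * cs.simple j) ^ M i j = 1 := by
      rw [← map_pow, h1, map_one]
    have h3 : φ (cs.simple i * cs.simple j) = 1 :=
      ker_torsionfree (hprod_right i j) hM h2
    have h4 : g i * g j = 1 := by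
      show φ (cs.simple i) * φ (cs.simple j) = 1
      rw [← map_mul]; exact h3
    have h5 : g j * g j = 1 := invol (hg_right j)
    have h6 : g i = g j := by
      calc g i = g i * (g j * g j) := by rw [h5, mul_one]
      _ = (g i * g j) * g j := by rw [mul_assoc]
      _ = g j := by rw [h4, one_mul]
    rw [h6]
  have hcomm : ∀ i j k l : I,
      cs.simple i * cs.simple j * (cs.simple k * cs.simple l)
        = cs.simple k * cs.simple l * (cs.simple i * cs.simple j) := by
    intro i j k l
    apply φ.injective
    exact (map_mul φ _ _).trans
      ((ker_comm (hprod_right i j) (hprod_right k l)).trans (map_mul φ _ _).symm)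
  by_cases hex : ∃ i j k : I,
      (g i).left ≠ (g j).left ∧ (g i).left ≠ (g k).left ∧ (g j).left ≠ (g k).left
  · obtain ⟨i, j, k, hij, hik, hjk⟩ := hex
    let f : I → Equiv.Perm (Fin 3) := fun a =>
      if (g a).left = (g i).left then Equiv.swap 0 1
      else if (g a).left = (g j).left then Equiv.swap 0 2 else 1
    have hfval : ∀ a, f a = if (g a).left = (g i).left then Equiv.swap 0 1
      else if (g a).left = (g j).left then Equiv.swap 0 2 else 1 := fun a => rfl
    have hfsq : ∀ a, f a * f a = 1 := by
      intro a
      rw [hfval]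
      split_ifs <;> simp [Equiv.swap_mul_self]
    have hlift : M.IsLiftable f := by
      intro a b
      by_cases hM : M a b = 0
      · rw [hM, pow_zero]
      · have hfab : f a = f b := by
          show (if (g a).left = (g i).left then Equiv.swap 0 1
            else if (g a).left = (g j).left then Equiv.swap 0 2 else 1) = _
          rw [hMne a b hM]
        rw [hfab, hfsq b, one_pow]
    let ψ := cs.lift ⟨f, hlift⟩
    have hψ : ∀ a, ψ (cs.simple a) = f a := fun a => cs.lift_apply_simple hlift a
    have hfi : f i = Equiv.swap 0 1 := by rw [hfval, if_pos rfl]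
    have hfj : f j = Equiv.swap 0 2 := by
      rw [hfval, if_neg (fun h => hij h.symm), if_pos rfl]
    have hfk : f k = 1 := by
      rw [hfval, if_neg (fun h => hik h.symm), if_neg (fun h => hjk h.symm)]
    have hc2 := congrArg ψ (hcomm i j i k)
    simp only [map_mul, hψ, hfi, hfj, hfk] at hc2
    exact absurd hc2 (by decide)
  · push_neg at hex
    obtain ⟨v, w, hvw⟩ : ∃ v w : Multiplicative (ℤ × ℤ),
        ∀ a, (g a).left = v ∨ (g a).left = w := by
      rcases isEmpty_or_nonempty I with hI | hI
      · exact ⟨1, 1, fun a => (hI.false a).elim⟩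
      · obtain ⟨i0⟩ := hI
        by_cases h2 : ∃ j0, (g j0).left ≠ (g i0).left
        · obtain ⟨j0, hj0⟩ := h2
          refine ⟨(g i0).left, (g j0).left, fun a => ?_⟩
          by_cases ha1 : (g a).left = (g i0).left
          · exact Or.inl ha1
          · by_cases ha2 : (g a).left = (g j0).left
            · exact Or.inr ha2
            · exact absurd ((hex i0 j0 a (fun h => hj0 h.symm)
                (fun h => ha1 h.symm)).symm) ha2
        · push_neg at h2
          exact ⟨(g i0).left, (g i0).left, fun a => Or.inl (h2 a)⟩
    set d : ℤ × ℤ := Multiplicative.toAdd v - Multiplicative.toAdd w with hd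
    set L : ℤ × ℤ → ℤ := fun u => if d = 0 then u.1 else d.2 * u.1 - d.1 * u.2 with hL
    have hLadd : ∀ u u', L (u + u') = L u + L u' := by
      intro u u'
      simp only [hL]
      split_ifs <;> (try simp [Prod.fst_add, Prod.snd_add]) <;> try ring
    have hLneg : ∀ u, L (-u) = - L u := by
      intro u
      simp only [hL]
      split_ifs <;> (try simp) <;> try ring
    have hL0 : L 0 = 0 := by
      simp only [hL]
      split_ifs <;> simp
    have hLvw : L (Multiplicative.toAdd v) = L (Multiplicative.toAdd w) := by
      have hLd : L d = 0 := by
        simp only [hL]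
        split_ifs with h <;> (try simp [h]) <;> try ring
      have h1 : Multiplicative.toAdd v = d + Multiplicative.toAdd w := by
        rw [hd, sub_add_cancel]
      rw [h1, hLadd, hLd, zero_add]
    obtain ⟨u0, hu0⟩ : ∃ u0 : ℤ × ℤ, L u0 ≠ 0 := by
      by_cases h0 : d = 0
      · refine ⟨(1, 0), ?_⟩
        simp only [hL]
        rw [if_pos h0]; norm_num
      · by_cases h1 : d.1 = 0
        · have h2 : d.2 ≠ 0 := fun h2 => h0 (Prod.ext h1 h2)
          refine ⟨(1, 0), ?_⟩
          simp only [hL]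
          rw [if_neg h0]; simpa using h2
        · refine ⟨(0, 1), ?_⟩
          simp only [hL]
          rw [if_neg h0]; simpa using h1
    set c : ℤ := L (Multiplicative.toAdd v) with hc
    have hcase : ∀ z : ZMod 2, z = 0 ∨ z = 1 := by decide
    let H : Subgroup Wgrp :=
      { carrier := {x | L (Multiplicative.toAdd x.left)
          = if Multiplicative.toAdd x.right = 0 then 0 else c}
        one_mem' := by
          show L (Multiplicative.toAdd (1 : Wgrp).left)
            = if Multiplicative.toAdd (1 : Wgrp).right = 0 then 0 else c
          rw [one_left, one_right]
          simp [hL0]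
        mul_mem' := by
          intro x y hx hy
          simp only [Set.mem_setOf_eq] at hx hy ⊢
          rw [mul_left, mul_right, negAct_apply]
          simp only [toAdd_mul]
          rcases hcase (Multiplicative.toAdd x.right) with h1 | h1 <;>
            rcases hcase (Multiplicative.toAdd y.right) with h2 | h2 <;>
            simp only [h1] at hx ⊢ <;> simp only [h2] at hy ⊢ <;>
            simp [toAdd_mul, toAdd_inv, hLadd, hLneg, hx, hy,
              show (1 : ZMod 2) ≠ 0 by decide, show (1 + 1 : ZMod 2) = 0 by decide]
        inv_mem' := by
          intro x hx
          simp only [Set.mem_setOf_eq] at hx ⊢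
          rw [inv_left, inv_right, negAct_apply, toAdd_inv]
          rcases hcase (Multiplicative.toAdd x.right) with h1 | h1 <;>
            simp only [h1] at hx ⊢ <;>
            simp [toAdd_inv, hLneg, hx, negAct_apply,
              show (-1 : ZMod 2) = 1 by decide, show (1 : ZMod 2) ≠ 0 by decide] }
    have hgH : ∀ a, g a ∈ H := by
      intro a
      show L (Multiplicative.toAdd (g a).left)
        = if Multiplicative.toAdd (g a).right = 0 then 0 else c
      rw [if_neg (zmod2_ne_one (hg_right a))]
      rcases hvw a with h | h
      · rw [h]
      · rw [h, ← hLvw]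
    have hclos : Subgroup.closure (Set.range g) = ⊤ := by
      calc Subgroup.closure (Set.range g)
          = Subgroup.closure (⇑φ.toMonoidHom '' Set.range cs.simple) := by
            rw [show Set.range g = ⇑φ.toMonoidHom '' Set.range cs.simple
              from Set.range_comp _ _]
        _ = (Subgroup.closure (Set.range cs.simple)).map φ.toMonoidHom :=
            (MonoidHom.map_closure _ _).symm
        _ = (⊤ : Subgroup M.Group).map φ.toMonoidHom := by
            rw [cs.subgroup_closure_range_simple]
        _ = ⊤ := Subgroup.map_top_of_surjective _ φ.surjective
    have hmem : inl (Multiplicative.ofAdd u0) ∈ H := by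
      have h3 : inl (Multiplicative.ofAdd u0) ∈ Subgroup.closure (Set.range g) := by
        rw [hclos]; exact Subgroup.mem_top _
      exact (Subgroup.closure_le H).mpr (by rintro _ ⟨a, rfl⟩; exact hgH a) h3
    have h4 : L u0 = 0 := by
      have h5 : L (Multiplicative.toAdd (inl (Multiplicative.ofAdd u0) : Wgrp).left)
          = if Multiplicative.toAdd (inl (Multiplicative.ofAdd u0) : Wgrp).right = 0
            then 0 else c := hmem
      rw [left_inl, right_inl, toAdd_ofAdd, toAdd_one, if_pos rfl] at h5
      exact h5
    exact hu0 h4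

/-! ### The presented group `rels1` is isomorphic to `Wgrp` -/

/-- The images of the three generators in `Wgrp`. -/
def Fgen : Fin 3 → Wgrp :=
  ![inr (Multiplicative.ofAdd (1 : ZMod 2)),
    inl (Multiplicative.ofAdd ((1, 0) : ℤ × ℤ)) * inr (Multiplicative.ofAdd (1 : ZMod 2)),
    inl (Multiplicative.ofAdd ((0, 1) : ℤ × ℤ)) * inr (Multiplicative.ofAdd (1 : ZMod 2))]

lemma Fgen_right : ∀ i, (Fgen i).right = Multiplicative.ofAdd (1 : ZMod 2) := by
  intro i
  fin_cases i <;>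
    simp [Fgen, mul_right, right_inl, right_inr]

lemma hF : ∀ r ∈ rels1, FreeGroup.lift Fgen r = 1 := by
  have hinv : ∀ x : Wgrp, x.right = Multiplicative.ofAdd (1 : ZMod 2) → x * x = 1 := by
    intro x hx
    exact invol (by rw [hx]; decide)
  intro r hr
  rcases hr with h | h | h | h
  · rw [h]
    simp only [map_mul, FreeGroup.lift_apply_of]
    exact hinv _ (Fgen_right 0)
  · rw [h]
    simp only [map_mul, FreeGroup.lift_apply_of]
    exact hinv _ (Fgen_right 1)
  · rw [h]
    simp only [map_mul, FreeGroup.lift_apply_of]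
    exact hinv _ (Fgen_right 2)
  · rw [Set.mem_singleton_iff.mp h]
    simp only [map_pow, map_mul, FreeGroup.lift_apply_of]
    rw [pow_two]
    refine hinv _ ?_
    rw [mul_right, mul_right, Fgen_right, Fgen_right, Fgen_right]
    decide

/-- The homomorphism from the presented group to `Wgrp`. -/
def fDown : PresentedGroup rels1 →* Wgrp := PresentedGroup.toGroup hF

def x0 : PresentedGroup rels1 := PresentedGroup.of 0
def x1 : PresentedGroup rels1 := PresentedGroup.of 1
def x2 : PresentedGroup rels1 := PresentedGroup.of 2

lemma relP {r : FreeGroup (Fin 3)} (hr : r ∈ rels1) : PresentedGroup.mk rels1 r = 1 :=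
  (QuotientGroup.eq_one_iff r).mpr (Subgroup.subset_normalClosure hr)

lemma x00 : x0 * x0 = 1 := by
  have h := relP (show FreeGroup.of 0 * FreeGroup.of 0 ∈ rels1 by left; rfl)
  rwa [map_mul] at h

lemma x11 : x1 * x1 = 1 := by
  have h := relP (show FreeGroup.of 1 * FreeGroup.of 1 ∈ rels1 by right; left; rfl)
  rwa [map_mul] at h

lemma x22 : x2 * x2 = 1 := by
  have h := relP (show FreeGroup.of 2 * FreeGroup.of 2 ∈ rels1 by right; right; left; rfl)
  rwa [map_mul] at h

lemma h3 : (x0 * x1 * x2) ^ 2 = 1 := by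
  have h := relP (show (FreeGroup.of 0 * FreeGroup.of 1 * FreeGroup.of 2) ^ 2 ∈ rels1 by
    right; right; right; rfl)
  rwa [map_pow, map_mul, map_mul] at h

lemma cancel0 : ∀ t, x0 * (x0 * t) = t := fun t => by rw [← mul_assoc, x00, one_mul]
lemma cancel1 : ∀ t, x1 * (x1 * t) = t := fun t => by rw [← mul_assoc, x11, one_mul]

lemma h3R : x0 * (x1 * (x2 * (x0 * (x1 * x2)))) = 1 := by
  have h := h3
  rw [pow_two] at h
  simpa only [mul_assoc] using h

lemma h6 : x2 * (x0 * x1) = x1 * (x0 * x2) := by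
  have h4 : x1 * (x2 * (x0 * (x1 * x2))) = x0 := by
    have h := congrArg (fun t => x0 * t) h3R
    rwa [cancel0, mul_one] at h
  have h5 : x2 * (x0 * (x1 * x2)) = x1 * x0 := by
    have h := congrArg (fun t => x1 * t) h4
    rwa [cancel1] at h
  have h := congrArg (fun t => t * x2) h5
  simp only [mul_assoc] at h
  rwa [x22, mul_one] at h

lemma hcAB : Commute (x1 * x0) (x2 * x0) := by
  have h : (x2 * x0) * (x1 * x0) = (x1 * x0) * (x2 * x0) := by
    calc (x2 * x0) * (x1 * x0) = (x2 * (x0 * x1)) * x0 := by simp only [mul_assoc]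
      _ = (x1 * (x0 * x2)) * x0 := by rw [h6]
      _ = (x1 * x0) * (x2 * x0) := by simp only [mul_assoc]
  exact h.symm

lemma x0inv : x0⁻¹ = x0 := inv_eq_of_mul_eq_one_right x00
lemma x1inv : x1⁻¹ = x1 := inv_eq_of_mul_eq_one_right x11
lemma x2inv : x2⁻¹ = x2 := inv_eq_of_mul_eq_one_right x22

lemma hcA : x0 * (x1 * x0) * x0⁻¹ = (x1 * x0)⁻¹ := by
  rw [x0inv, mul_inv_rev, x0inv, x1inv]
  simp only [mul_assoc]
  rw [x00, mul_one]

lemma hcB : x0 * (x2 * x0) * x0⁻¹ = (x2 * x0)⁻¹ := by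
  rw [x0inv, mul_inv_rev, x0inv, x2inv]
  simp only [mul_assoc]
  rw [x00, mul_one]

/-- The homomorphism `ℤ × ℤ → PresentedGroup rels1`. -/
def fZ : Multiplicative (ℤ × ℤ) →* PresentedGroup rels1 where
  toFun u := (x1 * x0) ^ (Multiplicative.toAdd u).1 * (x2 * x0) ^ (Multiplicative.toAdd u).2
  map_one' := by simp
  map_mul' u u' := by
    simp only [toAdd_mul, Prod.fst_add, Prod.snd_add, zpow_add]
    simp only [mul_assoc]
    congr 1
    rw [← mul_assoc, ← mul_assoc, (hcAB.zpow_zpow _ _).eq]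

lemma fZ_apply (u : Multiplicative (ℤ × ℤ)) :
    fZ u = (x1 * x0) ^ (Multiplicative.toAdd u).1 * (x2 * x0) ^ (Multiplicative.toAdd u).2 := rfl

/-- The homomorphism `ZMod 2 → PresentedGroup rels1`. -/
def fH : Multiplicative (ZMod 2) →* PresentedGroup rels1 where
  toFun z := if Multiplicative.toAdd z = 0 then 1 else x0
  map_one' := by simp
  map_mul' z z' := by
    have hcase : ∀ w : ZMod 2, w = 0 ∨ w = 1 := by decide
    rcases hcase (Multiplicative.toAdd z) with h1 | h1 <;>
      rcases hcase (Multiplicative.toAdd z') with h2 | h2 <;>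
      simp [toAdd_mul, h1, h2, x00, show (1 : ZMod 2) ≠ 0 by decide,
        show (1 + 1 : ZMod 2) = 0 by decide]

lemma fH_apply (z : Multiplicative (ZMod 2)) :
    fH z = if Multiplicative.toAdd z = 0 then 1 else x0 := rfl

lemma hcompat : ∀ h : Multiplicative (ZMod 2),
    fZ.comp (negAct h).toMonoidHom = (MulAut.conj (fH h)).toMonoidHom.comp fZ := by
  intro h
  apply MonoidHom.ext
  intro u
  simp only [MonoidHom.comp_apply, MulEquiv.coe_toMonoidHom, MulAut.conj_apply]
  by_cases h1 : Multiplicative.toAdd h = 0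
  · rw [negAct_apply, if_pos h1, fH_apply, if_pos h1]
    simp
  · rw [negAct_apply, if_neg h1, fH_apply, if_neg h1, map_inv]
    have hconj : x0 * fZ u * x0⁻¹ = (fZ u)⁻¹ := by
      have e1 : x0 * fZ u * x0⁻¹ = (MulAut.conj x0) (fZ u) := rfl
      rw [e1, fZ_apply, map_mul, map_zpow, map_zpow, MulAut.conj_apply, MulAut.conj_apply,
        hcA, hcB, inv_zpow, inv_zpow, ← mul_inv_rev,
        ← (hcAB.zpow_zpow _ _).eq]
    rw [hconj]

/-- The homomorphism from `Wgrp` to the presented group. -/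
def fUp : Wgrp →* PresentedGroup rels1 := SemidirectProduct.lift fZ fH hcompat

/-- The isomorphism between the presented group and `Wgrp`. -/
def presIso : PresentedGroup rels1 ≃* Wgrp := by
  have hdown_up : fDown.comp fUp = MonoidHom.id Wgrp := by
    apply SemidirectProduct.hom_ext
    · apply MonoidHom.ext
      intro n
      simp only [MonoidHom.comp_apply, MonoidHom.id_apply, lift_inl]
      have hA : fDown (x1 * x0) = inl (Multiplicative.ofAdd ((1, 0) : ℤ × ℤ)) := by
        rw [show (x1 * x0 : PresentedGroup rels1)
            = PresentedGroup.of 1 * PresentedGroup.of 0 from rfl, map_mul,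
          show fDown (PresentedGroup.of 1) = Fgen 1 from PresentedGroup.toGroup.of hF,
          show fDown (PresentedGroup.of 0) = Fgen 0 from PresentedGroup.toGroup.of hF]
        show (inl (Multiplicative.ofAdd ((1, 0) : ℤ × ℤ))
          * inr (Multiplicative.ofAdd (1 : ZMod 2)))
          * inr (Multiplicative.ofAdd (1 : ZMod 2)) = _
        rw [mul_assoc, ← map_mul]
        rw [show (Multiplicative.ofAdd (1 : ZMod 2)) * (Multiplicative.ofAdd (1 : ZMod 2))
          = 1 by decide, map_one, mul_one]
      have hB : fDown (x2 * x0) = inl (Multiplicative.ofAdd ((0, 1) : ℤ × ℤ)) := by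
        rw [show (x2 * x0 : PresentedGroup rels1)
            = PresentedGroup.of 2 * PresentedGroup.of 0 from rfl, map_mul,
          show fDown (PresentedGroup.of 2) = Fgen 2 from PresentedGroup.toGroup.of hF,
          show fDown (PresentedGroup.of 0) = Fgen 0 from PresentedGroup.toGroup.of hF]
        show (inl (Multiplicative.ofAdd ((0, 1) : ℤ × ℤ))
          * inr (Multiplicative.ofAdd (1 : ZMod 2)))
          * inr (Multiplicative.ofAdd (1 : ZMod 2)) = _
        rw [mul_assoc, ← map_mul]
        rw [show (Multiplicative.ofAdd (1 : ZMod 2)) * (Multiplicative.ofAdd (1 : ZMod 2))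
          = 1 by decide, map_one, mul_one]
      rw [show fUp (inl n) = fZ n from lift_inl _ _ _ _, fZ_apply, map_mul, map_zpow, map_zpow,
        hA, hB, ← map_zpow (inl : Multiplicative (ℤ × ℤ) →* Wgrp),
        ← map_zpow (inl : Multiplicative (ℤ × ℤ) →* Wgrp), ← map_mul]
      congr 1
      apply Multiplicative.toAdd.injective
      rw [toAdd_mul, toAdd_zpow, toAdd_zpow, toAdd_ofAdd, toAdd_ofAdd]
      apply Prod.ext <;> simp
    · apply MonoidHom.ext
      intro z
      simp only [MonoidHom.comp_apply, MonoidHom.id_apply, lift_inr]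
      have hcase : ∀ w : ZMod 2, w = 0 ∨ w = 1 := by decide
      rcases hcase (Multiplicative.toAdd z) with h1 | h1
      · have hz : z = 1 := Multiplicative.toAdd.injective h1
        rw [show fUp (inr z) = fH z from lift_inr _ _ _ _, fH_apply, if_pos h1, map_one, hz,
          map_one]
      · have hz : z = Multiplicative.ofAdd (1 : ZMod 2) := Multiplicative.toAdd.injective h1
        rw [show fUp (inr z) = fH z from lift_inr _ _ _ _, fH_apply, if_neg (by rw [h1]; decide),
          show fDown x0 = Fgen 0 from PresentedGroup.toGroup.of hF, hz]
        rfl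
  have hup_down : fUp.comp fDown = MonoidHom.id (PresentedGroup rels1) := by
    apply PresentedGroup.ext
    intro i
    simp only [MonoidHom.comp_apply, MonoidHom.id_apply]
    have hd : fDown (PresentedGroup.of i) = Fgen i := PresentedGroup.toGroup.of hF
    rw [hd]
    fin_cases i
    · show fUp (Fgen 0) = x0
      show fUp (inr (Multiplicative.ofAdd (1 : ZMod 2))) = x0
      rw [show fUp (inr (Multiplicative.ofAdd (1 : ZMod 2)))
        = fH (Multiplicative.ofAdd (1 : ZMod 2)) from lift_inr _ _ _ _]
      rw [fH_apply, if_neg (by decide)]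
    · show fUp (Fgen 1) = x1
      show fUp (inl (Multiplicative.ofAdd ((1, 0) : ℤ × ℤ))
        * inr (Multiplicative.ofAdd (1 : ZMod 2))) = x1
      rw [map_mul, show fUp (inl (Multiplicative.ofAdd ((1, 0) : ℤ × ℤ)))
        = fZ (Multiplicative.ofAdd ((1, 0) : ℤ × ℤ)) from lift_inl _ _ _ _,
        show fUp (inr (Multiplicative.ofAdd (1 : ZMod 2)))
        = fH (Multiplicative.ofAdd (1 : ZMod 2)) from lift_inr _ _ _ _,
        fZ_apply, fH_apply, if_neg (by decide)]
      simp only [toAdd_ofAdd]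
      rw [zpow_one, zpow_zero, mul_one, mul_assoc, x00, mul_one]
    · show fUp (Fgen 2) = x2
      show fUp (inl (Multiplicative.ofAdd ((0, 1) : ℤ × ℤ))
        * inr (Multiplicative.ofAdd (1 : ZMod 2))) = x2
      rw [map_mul, show fUp (inl (Multiplicative.ofAdd ((0, 1) : ℤ × ℤ)))
        = fZ (Multiplicative.ofAdd ((0, 1) : ℤ × ℤ)) from lift_inl _ _ _ _,
        show fUp (inr (Multiplicative.ofAdd (1 : ZMod 2)))
        = fH (Multiplicative.ofAdd (1 : ZMod 2)) from lift_inr _ _ _ _,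
        fZ_apply, fH_apply, if_neg (by decide)]
      simp only [toAdd_ofAdd]
      rw [zpow_one, zpow_zero, one_mul, mul_assoc, x00, mul_one]
  exact
    { toFun := fDown
      invFun := fUp
      left_inv := fun x => congrFun (congrArg (fun (f : _ →* _) => f.toFun) hup_down) x
      right_inv := fun x => congrFun (congrArg (fun (f : _ →* _) => f.toFun) hdown_up) x
      map_mul' := fDown.map_mul }

/-- The group `W = (ℤ × ℤ) ⋊ ℤ/2ℤ` (with the nontrivial element of
`ℤ/2ℤ` acting by negation), i.e. the group
`⟨w₀, w₁, w₂ | w₀² = w₁² = w₂² = e, (w₀w₁w₂)² = e⟩`, is not a Coxeter group: for every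
index set `I` and every Coxeter matrix `M` over `I`, there is no group isomorphism
between the Coxeter group of `M` and `W`; in particular `W` carries no Coxeter system. -/
theorem W_not_coxeter :
    (∀ (I : Type) (M : CoxeterMatrix I), IsEmpty (M.Group ≃* Wgrp)) ∧
    (∀ (I : Type) (M : CoxeterMatrix I), IsEmpty (CoxeterSystem M Wgrp)) ∧
    (∀ (I : Type) (M : CoxeterMatrix I), IsEmpty (M.Group ≃* PresentedGroup rels1)) := by
  refine ⟨key, fun I M => ?_, fun I M => ?_⟩
  · constructor
    intro cs'
    exact (key I M).false cs'.mulEquiv.symm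
  · constructor
    intro ι
    exact (key I M).false (ι.trans presIso)

end WeylPresentation
end
end
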